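/- The sign factor σ satisfies the cocycle-type identity: for finite subsets I, J, K of ℕ, (-1)^{σ(I,J)} (-1)^{σ(I Δ J, K)} = (-1)^{σ(J,K)} (-1)^{σ(I, J Δ K)}, expressing associativity of the product γ_I γ_J = (-1)^{σ(I,J)} γ_{I Δ J}. -/

import Mathlib

/-- `σ(I,J) = Σ_{j ∈ J} #{i ∈ I : i > j}`. -/
def sigmaCount (I J : Finset ℕ) : ℕ :=
  ∑ j ∈ J, (I.filter (fun i => j < i)).card

lemma card_symmDiff_zmod (A B : Finset ℕ) :
    ((symmDiff A B).card : ZMod 2) = A.card + B.card := by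
  have h1 : (symmDiff A B).card = (A \ B).card + (B \ A).card := by
    rw [symmDiff_def]; exact Finset.card_union_of_disjoint disjoint_sdiff_sdiff
  have h2 : (A ∩ B).card + (A \ B).card = A.card := Finset.card_inter_add_card_sdiff A B
  have h3 : (B ∩ A).card + (B \ A).card = B.card := Finset.card_inter_add_card_sdiff B A
  have h4 : (A ∩ B).card = (B ∩ A).card := by rw [Finset.inter_comm]
  have key : (symmDiff A B).card + 2 * (A ∩ B).card = A.card + B.card := by omega
  have hc := congrArg (Nat.cast : ℕ → ZMod 2) key
  push_cast at hc ⊢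
  have h0 : (2 : ZMod 2) = 0 := by decide
  linear_combination hc - ((A ∩ B).card : ZMod 2) * h0

lemma sum_symmDiff_zmod (A B : Finset ℕ) (f : ℕ → ℕ) :
    ((∑ x ∈ symmDiff A B, f x : ℕ) : ZMod 2) =
      ((∑ x ∈ A, f x : ℕ) : ZMod 2) + ((∑ x ∈ B, f x : ℕ) : ZMod 2) := by
  have h1 : (∑ x ∈ symmDiff A B, f x) = (∑ x ∈ A \ B, f x) + (∑ x ∈ B \ A, f x) := by
    rw [symmDiff_def]; exact Finset.sum_union disjoint_sdiff_sdiff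
  have h2 : (∑ x ∈ A ∩ B, f x) + (∑ x ∈ A \ B, f x) = ∑ x ∈ A, f x :=
    Finset.sum_inter_add_sum_sdiff A B f
  have h3 : (∑ x ∈ B ∩ A, f x) + (∑ x ∈ B \ A, f x) = ∑ x ∈ B, f x :=
    Finset.sum_inter_add_sum_sdiff B A f
  have h4 : (∑ x ∈ A ∩ B, f x) = (∑ x ∈ B ∩ A, f x) := by rw [Finset.inter_comm]
  have key : (∑ x ∈ symmDiff A B, f x) + 2 * (∑ x ∈ A ∩ B, f x) = (∑ x ∈ A, f x) + (∑ x ∈ B, f x) := by omega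
  have hc := congrArg (Nat.cast : ℕ → ZMod 2) key
  push_cast at hc ⊢
  have h0 : (2 : ZMod 2) = 0 := by decide
  linear_combination hc - (∑ x ∈ A ∩ B, (f x : ZMod 2)) * h0

lemma sigma_left (I J K : Finset ℕ) :
    ((sigmaCount (symmDiff I J) K : ℕ) : ZMod 2) =
      (sigmaCount I K : ZMod 2) + (sigmaCount J K : ZMod 2) := by
  unfold sigmaCount
  push_cast
  rw [← Finset.sum_add_distrib]
  apply Finset.sum_congr rfl
  intro j _
  have hf : (symmDiff I J).filter (fun i => j < i) =
      symmDiff (I.filter (fun i => j < i)) (J.filter (fun i => j < i)) := by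
    ext a; by_cases h : j < a <;> simp [Finset.mem_symmDiff, h]
  rw [hf, card_symmDiff_zmod]

lemma sigma_right (I J K : Finset ℕ) :
    ((sigmaCount I (symmDiff J K) : ℕ) : ZMod 2) =
      (sigmaCount I J : ZMod 2) + (sigmaCount I K : ZMod 2) := by
  unfold sigmaCount
  exact sum_symmDiff_zmod J K _

lemma neg_one_pow_congr_zmod (m n : ℕ) (h : (m : ZMod 2) = n) : ((-1 : ℤ)) ^ m = (-1) ^ n := by
  have hmod : m % 2 = n % 2 := by
    have := (ZMod.natCast_eq_natCast_iff m n 2).mp h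
    simpa [Nat.ModEq] using this
  rcases Nat.even_or_odd m with hm | hm
  · have hn : Even n := by
      rw [Nat.even_iff] at hm ⊢; omega
    rw [hm.neg_one_pow, hn.neg_one_pow]
  · have hn : Odd n := by
      rw [Nat.odd_iff] at hm ⊢; omega
    rw [hm.neg_one_pow, hn.neg_one_pow]

/-- Cocycle identity for the sign factor, expressing associativity of
`γ_I γ_J = (-1)^{σ(I,J)} γ_{I Δ J}`. -/
theorem sigmaCount_cocycle (I J K : Finset ℕ) :
    (-1 : ℤ) ^ (sigmaCount I J) * (-1 : ℤ) ^ (sigmaCount (symmDiff I J) K) =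
      (-1 : ℤ) ^ (sigmaCount J K) * (-1 : ℤ) ^ (sigmaCount I (symmDiff J K)) := by
  rw [← pow_add, ← pow_add]
  apply neg_one_pow_congr_zmod
  push_cast
  rw [sigma_left, sigma_right]
  ring
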